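/- Let φ : X → Y be a finite-to-one open code from a shift space X to an irreducible shift space Y. Then there exists d > 0 such that every doubly transitive point of Y has exactly d preimages under φ, and every point of Y has at most d preimages. -/

import Mathlib

open Set Function Filter

variable {A : Type*} {B : Type*} {C : Type*}

/-- The shift map on the full shift. -/
def shiftMap (x : ℤ → A) : ℤ → A := fun i => x (i + 1)

/-- A shift space (subshift): a closed shift-invariant subset of the full shift. -/
def IsSubshift [TopologicalSpace A] (X : Set (ℤ → A)) : Prop :=
  IsClosed X ∧ shiftMap '' X = X

/-- The word `w` occurs in `x` at position `k`. -/
def OccursAt (x : ℤ → A) (k : ℤ) (w : List A) : Prop :=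
  ∀ i : Fin w.length, x (k + ((i : ℕ) : ℤ)) = w.get i

/-- The word `w` belongs to the language of `X`. -/
def WordIn (X : Set (ℤ → A)) (w : List A) : Prop :=
  ∃ x ∈ X, ∃ k : ℤ, OccursAt x k w

/-- Irreducibility of a shift space. -/
def IrreducibleSubshift (X : Set (ℤ → A)) : Prop :=
  ∀ u v : List A, WordIn X u → WordIn X v → ∃ w : List A, WordIn X (u ++ w ++ v)

/-- Nonwandering shift space. -/
def NonwanderingSubshift (X : Set (ℤ → A)) : Prop :=
  ∀ u : List A, WordIn X u → ∃ w : List A, WordIn X (u ++ w ++ u)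

/-- A shift of finite type: defined by a finite set of forbidden words. -/
def IsSFT (X : Set (ℤ → A)) : Prop :=
  ∃ F : Finset (List A), X = {x : ℤ → A | ∀ w ∈ F, ∀ k : ℤ, ¬ OccursAt x k w}

/-- A (sliding block) code: a continuous shift-commuting map between shift spaces. -/
def IsCode [TopologicalSpace A] [TopologicalSpace B]
    {X : Set (ℤ → A)} {Y : Set (ℤ → B)} (φ : X → Y) : Prop :=
  Continuous φ ∧
    ∀ (x : X) (hx : shiftMap (x : ℤ → A) ∈ X),
      ((φ ⟨shiftMap (x : ℤ → A), hx⟩ : Y) : ℤ → B) = shiftMap ((φ x : Y) : ℤ → B)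

/-- A sofic shift: a factor of a shift of finite type. -/
def IsSofic [TopologicalSpace A] (Y : Set (ℤ → A)) : Prop :=
  ∃ (n : ℕ) (Z : Set (ℤ → Fin n)), IsSubshift Z ∧ IsSFT Z ∧
    ∃ ψ : Z → Y, IsCode ψ ∧ Function.Surjective ψ

/-- Two points are left asymptotic if they agree on all sufficiently negative coordinates. -/
def LeftAsymptotic (x y : ℤ → A) : Prop := ∃ N : ℤ, ∀ i ≤ N, x i = y i

/-- Two points are right asymptotic if they agree on all sufficiently positive coordinates. -/
def RightAsymptotic (x y : ℤ → A) : Prop := ∃ N : ℤ, ∀ i, N ≤ i → x i = y i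

/-- A code is right closing if it never collapses two distinct left asymptotic points. -/
def RightClosing {X : Set (ℤ → A)} {Y : Set (ℤ → B)} (φ : X → Y) : Prop :=
  ∀ x x' : X, LeftAsymptotic (x : ℤ → A) (x' : ℤ → A) → φ x = φ x' → x = x'

/-- A code is left closing if it never collapses two distinct right asymptotic points. -/
def LeftClosing {X : Set (ℤ → A)} {Y : Set (ℤ → B)} (φ : X → Y) : Prop :=
  ∀ x x' : X, RightAsymptotic (x : ℤ → A) (x' : ℤ → A) → φ x = φ x' → x = x'

/-- Bi-closing: both right and left closing. -/
def BiClosing {X : Set (ℤ → A)} {Y : Set (ℤ → B)} (φ : X → Y) : Prop :=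
  RightClosing φ ∧ LeftClosing φ

/-- Finite-to-one map. -/
def FiniteToOne {α β : Type*} (φ : α → β) : Prop := ∀ y : β, (φ ⁻¹' {y}).Finite

/-- Every fiber has exactly `d` elements. -/
def ExactlyDToOne {α β : Type*} (φ : α → β) (d : ℕ) : Prop :=
  ∀ y : β, (φ ⁻¹' {y}).Finite ∧ Nat.card (φ ⁻¹' {y}) = d

/-- Constant-to-one map. -/
def ConstantToOne {α β : Type*} (φ : α → β) : Prop := ∃ d : ℕ, ExactlyDToOne φ d

/-- A doubly transitive point: every word of `Y` occurs infinitely often to the left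
and to the right. -/
def DoublyTransitive (Y : Set (ℤ → A)) (y : ℤ → A) : Prop :=
  ∀ w : List A, WordIn Y w → ∀ N : ℤ,
    (∃ k ≥ N, OccursAt y k w) ∧ (∃ k ≤ N, OccursAt y k w)

/-- The maximal nonwandering subshift of `X`. -/
def OmegaSet [TopologicalSpace A] (X : Set (ℤ → A)) : Set (ℤ → A) :=
  ⋃₀ {Z : Set (ℤ → A) | Z ⊆ X ∧ IsSubshift Z ∧ NonwanderingSubshift Z}

/-- Topological entropy of a subshift, via the growth rate of the number of words. -/
noncomputable def subshiftEntropy (X : Set (ℤ → A)) : ℝ :=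
  Filter.limsup
    (fun n : ℕ => Real.log (Nat.card {w : List A | w.length = n ∧ WordIn X w}) / n)
    Filter.atTop

/-- An irreducible component of `X`: a maximal nonempty irreducible subshift of `X`. -/
def IsIrreducibleComponent [TopologicalSpace A] (X X₀ : Set (ℤ → A)) : Prop :=
  X₀ ⊆ X ∧ IsSubshift X₀ ∧ X₀.Nonempty ∧ IrreducibleSubshift X₀ ∧
    ∀ Z : Set (ℤ → A), Z ⊆ X → IsSubshift Z → IrreducibleSubshift Z → X₀ ⊆ Z → Z = X₀

-- The metric on a shift space: `d(x,y) = 2^{-k}` where `k` is maximal with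
-- `x` and `y` agreeing on `[-k,k]`, and `0` if `x = y`.
open Classical in
noncomputable def shiftDist (x y : ℤ → A) : ℝ :=
  if x = y then 0
  else (2 : ℝ) ^ (-((sSup {n : ℕ | ∀ i : ℤ, |i| ≤ (n : ℤ) → x i = y i} : ℕ) : ℤ))


def shiftZ (s : ℤ) (x : ℤ → A) : ℤ → A := fun i => x (i + s)

lemma shiftZ_shiftZ (s t : ℤ) (x : ℤ → A) : shiftZ s (shiftZ t x) = shiftZ (s + t) x := by
  funext i; simp [shiftZ, add_assoc]

lemma shiftMap_eq_shiftZ : (shiftMap : (ℤ → A) → (ℤ → A)) = shiftZ 1 := rfl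

lemma shiftZ_mem [TopologicalSpace A] {Y : Set (ℤ → A)} (hY : IsSubshift Y) :
    ∀ (s : ℤ), ∀ y ∈ Y, shiftZ s y ∈ Y := by
  have h1 : ∀ y ∈ Y, shiftZ 1 y ∈ Y := by
    intro y hy
    have : shiftMap y ∈ shiftMap '' Y := mem_image_of_mem _ hy
    rwa [hY.2] at this
  have hm : ∀ y ∈ Y, shiftZ (-1) y ∈ Y := by
    intro y hy
    have : y ∈ shiftMap '' Y := by rw [hY.2]; exact hy
    obtain ⟨z, hz, hzy⟩ := this
    have : shiftZ (-1) y = z := by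
      funext i
      have : shiftMap z (i + -1) = y (i + -1) := by rw [hzy]
      simpa [shiftMap, shiftZ] using this.symm
    rwa [this]
  intro s
  induction s using Int.induction_on with
  | zero => intro y hy; have : shiftZ 0 y = y := by funext i; simp [shiftZ]
            rwa [this]
  | succ n ih =>
      intro y hy
      have := h1 _ (ih y hy)
      rwa [shiftZ_shiftZ, add_comm] at this
  | pred n ih =>
      intro y hy
      have := hm _ (ih y hy)
      rw [shiftZ_shiftZ] at this
      have he : (-1 + -(n:ℤ)) = (-(n:ℤ) - 1) := by ring
      rwa [he] at this

def window (y : ℤ → A) (l : ℤ) (n : ℕ) : List A := List.ofFn (fun j : Fin n => y (l + j))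

lemma occursAt_window (y : ℤ → A) (l : ℤ) (n : ℕ) : OccursAt y l (window y l n) := by
  intro i
  show y (l + ((i : ℕ) : ℤ)) = (window y l n)[(i : ℕ)]'i.2
  simp [window]

lemma window_length (y : ℤ → A) (l : ℤ) (n : ℕ) : (window y l n).length = n := by
  simp [window]

lemma wordIn_window {Y : Set (ℤ → A)} {y : ℤ → A} (hy : y ∈ Y) (l : ℤ) (n : ℕ) :
    WordIn Y (window y l n) := ⟨y, hy, l, occursAt_window y l n⟩

lemma occursAt_shiftZ {y : ℤ → A} {s k : ℤ} {w : List A} (h : OccursAt y (k + s) w) :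
    OccursAt (shiftZ s y) k w := by
  intro i
  have := h i
  simpa [shiftZ, add_right_comm] using this

lemma occursAt_append_left {x : ℤ → A} {k : ℤ} {u v : List A} (h : OccursAt x k (u ++ v)) :
    OccursAt x k u := by
  intro i
  have hi : (i : ℕ) < (u ++ v).length := by
    have := i.2; simp only [List.length_append]; omega
  have := h ⟨i, hi⟩
  simp only [List.get_eq_getElem] at this ⊢
  rwa [List.getElem_append_left] at this

lemma occursAt_append_right {x : ℤ → A} {k : ℤ} {u v : List A} (h : OccursAt x k (u ++ v)) :
    OccursAt x (k + u.length) v := by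
  intro i
  have hi : u.length + (i : ℕ) < (u ++ v).length := by
    have := i.2; simp only [List.length_append]; omega
  have := h ⟨u.length + (i : ℕ), hi⟩
  simp only [List.get_eq_getElem] at this ⊢
  have h2 : (u ++ v)[u.length + (i:ℕ)]'hi = v[(i:ℕ)] := by
    rw [List.getElem_append_right (Nat.le_add_right _ _)]
    congr 1
    omega
  rw [h2] at this
  rw [← this]
  congr 1
  push_cast
  ring

lemma occursAt_congr {x y : ℤ → A} {k : ℤ} {w : List A}
    (h : OccursAt x k w) (hagree : ∀ i, k ≤ i → i < k + w.length → x i = y i) :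
    OccursAt y k w := by
  intro i
  rw [← hagree (k + (i : ℕ)) (by omega) (by have := i.2; omega)]
  exact h i

lemma eq_of_occursAt {x x' : ℤ → A} {k : ℤ} {w : List A}
    (h : OccursAt x k w) (h' : OccursAt x' k w) :
    ∀ i, k ≤ i → i < k + w.length → x i = x' i := by
  intro i hki hik
  have hlt : (i - k).toNat < w.length := by omega
  have hk : k + (((i - k).toNat : ℕ) : ℤ) = i := by omega
  have h1 := h ⟨_, hlt⟩
  have h2 := h' ⟨_, hlt⟩
  rw [hk] at h1 h2
  exact h1.trans h2.symm

lemma extend_step [TopologicalSpace A] {Y : Set (ℤ → A)} (hY : IsSubshift Y)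
    (hirr : IrreducibleSubshift Y) {y : ℤ → A} (hy : y ∈ Y) (l : ℤ) (n : ℕ)
    {w : List A} (hw : WordIn Y w) :
    ∃ y' ∈ Y, (∀ i, l ≤ i → i < l + n → y' i = y i) ∧
      (∃ kR : ℤ, l + n ≤ kR ∧ OccursAt y' kR w) ∧
      (∃ kL : ℤ, kL + w.length ≤ l ∧ OccursAt y' kL w) := by
  set u := window y l n with hu
  have hwu : WordIn Y u := wordIn_window hy l n
  obtain ⟨a, ha⟩ := hirr u w hwu hw
  obtain ⟨b, hb⟩ := hirr w (u ++ a ++ w) hw ha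
  obtain ⟨z, hz, k, hocc⟩ := hb
  -- hocc : OccursAt z k (w ++ b ++ (u ++ a ++ w))
  have hzw : OccursAt z k w := occursAt_append_left (occursAt_append_left hocc)
  have h2 : OccursAt z (k + ((w ++ b).length : ℕ)) (u ++ a ++ w) := occursAt_append_right hocc
  set K : ℤ := k + ((w ++ b).length : ℕ) with hK
  have hzu : OccursAt z K u := occursAt_append_left (occursAt_append_left h2)
  have hzw2 : OccursAt z (K + ((u ++ a).length : ℕ)) w := occursAt_append_right h2
  set s : ℤ := K - l with hs
  refine ⟨shiftZ s z, shiftZ_mem hY s z hz, ?_, ?_, ?_⟩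
  · -- agreement on [l, l+n)
    have hyu : OccursAt (shiftZ s z) l u := occursAt_shiftZ (by rw [show l + s = K by omega]; exact hzu)
    have hyu' : OccursAt y l u := occursAt_window y l n
    intro i hi hin
    exact eq_of_occursAt hyu hyu' i hi (by rw [hu, window_length]; omega)
  · refine ⟨l + (u.length : ℤ) + (a.length : ℤ), ?_, ?_⟩
    · have : u.length = n := by rw [hu, window_length]
      omega
    · apply occursAt_shiftZ
      have : l + (u.length : ℤ) + (a.length : ℤ) + s = K + ((u ++ a).length : ℕ) := by
        simp [List.length_append]; push_cast; omega
      rw [this]; exact hzw2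
  · refine ⟨k - s, ?_, ?_⟩
    · have : (((w ++ b).length : ℕ) : ℤ) = (w.length : ℤ) + (b.length : ℤ) := by
        simp [List.length_append]
      omega
    · apply occursAt_shiftZ
      rw [show k - s + s = k by ring]
      exact hzw

/-- Transition predicate for the doubly-transitive-point construction. -/
def DTTrans (Y : Set (ℤ → A)) (w : List A) (q p : (ℤ → A) × ℤ × ℤ) : Prop :=
  p.1 ∈ Y ∧ p.2.1 ≤ q.2.1 - 1 ∧ q.2.2 + 1 ≤ p.2.2 ∧
  (∀ i, q.2.1 ≤ i → i ≤ q.2.2 → p.1 i = q.1 i) ∧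
  (∃ k, q.2.2 ≤ k ∧ p.2.1 ≤ k ∧ k + w.length ≤ p.2.2 ∧ OccursAt p.1 k w) ∧
  (∃ k, p.2.1 ≤ k ∧ k + w.length ≤ q.2.1 ∧ OccursAt p.1 k w)

lemma dtTrans_exists [TopologicalSpace A] {Y : Set (ℤ → A)} (hY : IsSubshift Y)
    (hirr : IrreducibleSubshift Y) {w : List A} (hw : WordIn Y w)
    (q : (ℤ → A) × ℤ × ℤ) (hq : q.1 ∈ Y) (hlr : q.2.1 ≤ q.2.2) :
    ∃ p, DTTrans Y w q p := by
  obtain ⟨l, r⟩ := q.2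
  obtain ⟨y', hy', hagree, ⟨kR, hkR, hoR⟩, ⟨kL, hkL, hoL⟩⟩ :=
    extend_step hY hirr hq q.2.1 ((q.2.2 - q.2.1 + 1).toNat) hw
  refine ⟨(y', min kL q.2.1 - 1, max (kR + w.length) q.2.2 + 1), hy', ?_, ?_, ?_, ?_, ?_⟩
  · simp only []; omega
  · simp only []; omega
  · intro i hi hi2
    exact hagree i hi (by omega)
  · refine ⟨kR, ?_, ?_, ?_, hoR⟩ <;> (try simp only []) <;> omega
  · refine ⟨kL, ?_, ?_, hoL⟩ <;> (try simp only []) <;> omega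

/-- The recursively constructed sequence of (point, interval) states. -/
noncomputable def dtSeq [TopologicalSpace A] {Y : Set (ℤ → A)} (hY : IsSubshift Y)
    (hirr : IrreducibleSubshift Y) (g : ℕ → List A) (hg : ∀ n, WordIn Y (g n))
    (q0 : (ℤ → A) × ℤ × ℤ) (hq0 : q0.1 ∈ Y ∧ q0.2.1 ≤ q0.2.2) :
    ∀ _ : ℕ, {q : (ℤ → A) × ℤ × ℤ // q.1 ∈ Y ∧ q.2.1 ≤ q.2.2}
  | 0 => ⟨q0, hq0⟩
  | n + 1 =>
      let prev := dtSeq hY hirr g hg q0 hq0 n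
      let h := dtTrans_exists hY hirr (hg n) prev.1 prev.2.1 prev.2.2
      ⟨Classical.choose h, (Classical.choose_spec h).1, by
        have hs := Classical.choose_spec h
        have := prev.2.2
        obtain ⟨_, h2, h3, _⟩ := hs
        omega⟩

lemma dtSeq_trans [TopologicalSpace A] {Y : Set (ℤ → A)} (hY : IsSubshift Y)
    (hirr : IrreducibleSubshift Y) (g : ℕ → List A) (hg : ∀ n, WordIn Y (g n))
    (q0 : (ℤ → A) × ℤ × ℤ) (hq0 : q0.1 ∈ Y ∧ q0.2.1 ≤ q0.2.2) (n : ℕ) :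
    DTTrans Y (g n) (dtSeq hY hirr g hg q0 hq0 n).1 (dtSeq hY hirr g hg q0 hq0 (n+1)).1 := by
  conv_rhs => rw [dtSeq]
  exact Classical.choose_spec _


lemma dtSeq_zero [TopologicalSpace A] {Y : Set (ℤ → A)} (hY : IsSubshift Y)
    (hirr : IrreducibleSubshift Y) (g : ℕ → List A) (hg : ∀ n, WordIn Y (g n))
    (q0 : (ℤ → A) × ℤ × ℤ) (hq0 : q0.1 ∈ Y ∧ q0.2.1 ≤ q0.2.2) :
    (dtSeq hY hirr g hg q0 hq0 0).1 = q0 := by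
  rw [dtSeq]

lemma wordIn_nil {Y : Set (ℤ → A)} (hne : Y.Nonempty) : WordIn Y ([] : List A) := by
  obtain ⟨y, hy⟩ := hne
  exact ⟨y, hy, 0, fun i => absurd i.isLt (by simp)⟩

lemma exists_doublyTransitive [TopologicalSpace A] [Countable A] {Y : Set (ℤ → A)}
    (hY : IsSubshift Y) (hirr : IrreducibleSubshift Y) (hne : Y.Nonempty) :
    ∃ y ∈ Y, DoublyTransitive Y y := by
  classical
  obtain ⟨y0, hy0⟩ := hne
  obtain ⟨e, he⟩ := exists_surjective_nat (List A)
  set g : ℕ → List A := fun n =>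
    if WordIn Y (e (Nat.unpair n).1) then e (Nat.unpair n).1 else [] with hgdef
  have hg : ∀ n, WordIn Y (g n) := by
    intro n
    by_cases h : WordIn Y (e (Nat.unpair n).1)
    · simpa [hgdef, h] using h
    · simpa [hgdef, h] using wordIn_nil ⟨y0, hy0⟩
  set S := dtSeq hY hirr g hg (y0, 0, 0) ⟨hy0, le_refl 0⟩ with hS
  set yn : ℕ → (ℤ → A) := fun n => (S n).1.1 with hyn
  set ln : ℕ → ℤ := fun n => (S n).1.2.1 with hln
  set rn : ℕ → ℤ := fun n => (S n).1.2.2 with hrn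
  have memY : ∀ n, yn n ∈ Y := fun n => (S n).2.1
  have hlr : ∀ n, ln n ≤ rn n := fun n => (S n).2.2
  have htr := dtSeq_trans hY hirr g hg (y0, 0, 0) ⟨hy0, le_refl 0⟩
  have hstep : ∀ n, ln (n+1) ≤ ln n - 1 ∧ rn n + 1 ≤ rn (n+1) :=
    fun n => ⟨(htr n).2.1, (htr n).2.2.1⟩
  have hagree1 : ∀ n, ∀ i, ln n ≤ i → i ≤ rn n → yn (n+1) i = yn n i :=
    fun n => (htr n).2.2.2.1
  have h0 : ln 0 = 0 ∧ rn 0 = 0 := by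
    constructor <;> simp [hln, hrn, hS, dtSeq_zero]
  have hlb : ∀ n, ln n ≤ -(n:ℤ) ∧ (n:ℤ) ≤ rn n := by
    intro n
    induction n with
    | zero => omega
    | succ m ih => have := hstep m; push_cast; omega
  have hmono : ∀ n m, n ≤ m → ln m ≤ ln n ∧ rn n ≤ rn m := by
    intro n m hnm
    induction m, hnm using Nat.le_induction with
    | base => omega
    | succ m hm ih => have := hstep m; omega
  have hagree : ∀ n m, n ≤ m → ∀ i, ln n ≤ i → i ≤ rn n → yn m i = yn n i := by
    intro n m hnm
    induction m, hnm using Nat.le_induction with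
    | base => intro i _ _; rfl
    | succ m hm ih =>
        intro i h1 h2
        have hmono' := hmono n m hm
        rw [hagree1 m i (by omega) (by omega)]
        exact ih i h1 h2
  set y : ℤ → A := fun i => yn i.natAbs i with hy
  have hyagree : ∀ n, ∀ i, ln n ≤ i → i ≤ rn n → y i = yn n i := by
    intro n i h1 h2
    rcases le_total n i.natAbs with h | h
    · exact hagree n i.natAbs h i h1 h2
    · have hb := hlb i.natAbs
      have h1' : ln i.natAbs ≤ i := by omega
      have h2' : i ≤ rn i.natAbs := by omega
      exact (hagree i.natAbs n h i h1' h2').symm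
  have hyY : y ∈ Y := by
    have htd : Tendsto (fun n => yn n) atTop (nhds y) := by
      rw [tendsto_pi_nhds]
      intro i
      apply Tendsto.congr' _ tendsto_const_nhds
      filter_upwards [eventually_ge_atTop i.natAbs] with n hn
      have hb := hlb n
      exact hyagree n i (by omega) (by omega)
    exact hY.1.mem_of_tendsto htd (Eventually.of_forall memY)
  refine ⟨y, hyY, ?_⟩
  intro w hw N
  obtain ⟨m, hm⟩ := he w
  set n := Nat.pair m N.natAbs with hn
  have hnN : N.natAbs ≤ n := Nat.right_le_pair m N.natAbs
  have hgn : g n = w := by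
    simp only [hgdef, hn, Nat.unpair_pair]
    rw [hm]
    simp [hw]
  have htrn := htr n
  rw [hgn] at htrn
  obtain ⟨_, hl1, hr1, _, ⟨kR, hkR1, hkR2, hkR3, hoR⟩, ⟨kL, hkL1, hkL2, hoL⟩⟩ := htrn
  have hl1' : ln (n+1) ≤ ln n - 1 := hl1
  have hr1' : rn n + 1 ≤ rn (n+1) := hr1
  have hkR1' : rn n ≤ kR := hkR1
  have hkR2' : ln (n+1) ≤ kR := hkR2
  have hkR3' : kR + (w.length : ℤ) ≤ rn (n+1) := hkR3
  have hkL1' : ln (n+1) ≤ kL := hkL1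
  have hkL2' : kL + (w.length : ℤ) ≤ ln n := hkL2
  clear hl1 hr1 hkR1 hkR2 hkR3 hkL1 hkL2
  have hb := hlb n
  have hb1 := hlb (n+1)
  have hlrn1 := hlr (n+1)
  constructor
  · refine ⟨kR, by omega, ?_⟩
    apply occursAt_congr hoR
    intro i hi1 hi2
    exact (hyagree (n+1) i (by omega) (by omega)).symm
  · refine ⟨kL, ?_, ?_⟩
    · have : (w.length : ℤ) ≥ 0 := by positivity
      omega
    · apply occursAt_congr hoL
      intro i hi1 hi2
      have := hlr n
      exact (hyagree (n+1) i (by omega) (by omega)).symm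

/-- The shift by `s` as a self-map of a subshift. -/
def shiftPt [TopologicalSpace A] {X : Set (ℤ → A)} (hX : IsSubshift X) (s : ℤ) (x : ↥X) : ↥X :=
  ⟨shiftZ s x.1, shiftZ_mem hX s x.1 x.2⟩

lemma shiftPt_comp [TopologicalSpace A] {X : Set (ℤ → A)} (hX : IsSubshift X) (s t : ℤ) (x : ↥X) :
    shiftPt hX s (shiftPt hX t x) = shiftPt hX (s + t) x :=
  Subtype.ext (shiftZ_shiftZ s t x.1)

lemma shiftPt_zero [TopologicalSpace A] {X : Set (ℤ → A)} (hX : IsSubshift X) (x : ↥X) :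
    shiftPt hX 0 x = x := by
  apply Subtype.ext; funext i; simp [shiftPt, shiftZ]

lemma shiftPt_inj [TopologicalSpace A] {X : Set (ℤ → A)} (hX : IsSubshift X) (s : ℤ) :
    Function.Injective (shiftPt hX s) := by
  intro x x' h
  have := congrArg (shiftPt hX (-s)) h
  rwa [shiftPt_comp, shiftPt_comp, neg_add_cancel, shiftPt_zero, shiftPt_zero] at this

lemma code_shiftPt [TopologicalSpace A] [TopologicalSpace B]
    {X : Set (ℤ → A)} {Y : Set (ℤ → B)} (hX : IsSubshift X) (hY : IsSubshift Y)
    {φ : ↥X → ↥Y} (hφ : IsCode φ) (x : ↥X) :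
    φ (shiftPt hX 1 x) = shiftPt hY 1 (φ x) := by
  apply Subtype.ext
  have hx : shiftMap (x : ℤ → A) ∈ X := shiftZ_mem hX 1 x.1 x.2
  have := hφ.2 x hx
  exact this

lemma code_shiftPt_nat [TopologicalSpace A] [TopologicalSpace B]
    {X : Set (ℤ → A)} {Y : Set (ℤ → B)} (hX : IsSubshift X) (hY : IsSubshift Y)
    {φ : ↥X → ↥Y} (hφ : IsCode φ) (k : ℕ) (x : ↥X) :
    φ (shiftPt hX (k : ℤ) x) = shiftPt hY (k : ℤ) (φ x) := by
  induction k with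
  | zero => simp [shiftPt_zero]
  | succ m ih =>
      have h1 : ((m + 1 : ℕ) : ℤ) = 1 + (m : ℤ) := by push_cast; ring
      rw [h1, ← shiftPt_comp hX, code_shiftPt hX hY hφ, ih, shiftPt_comp]

lemma fiber_card_shift [TopologicalSpace A] [TopologicalSpace B]
    {X : Set (ℤ → A)} {Y : Set (ℤ → B)} (hX : IsSubshift X) (hY : IsSubshift Y)
    {φ : ↥X → ↥Y} (hφ : IsCode φ) (k : ℕ) (y : ↥Y) :
    Nat.card (φ ⁻¹' {shiftPt hY (k : ℤ) y}) = Nat.card (φ ⁻¹' {y}) := by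
  have key : ∀ x : ↥X, φ x = shiftPt hY (k:ℤ) y → φ (shiftPt hX (-(k:ℤ)) x) = y := by
    intro x hx
    have h1 : φ (shiftPt hX ((k:ℤ)) (shiftPt hX (-(k:ℤ)) x)) = φ x := by
      rw [shiftPt_comp, add_neg_cancel, shiftPt_zero]
    rw [code_shiftPt_nat hX hY hφ] at h1
    apply shiftPt_inj hY (k:ℤ)
    rw [h1, hx]
  have memfix : ∀ x : ↥(φ ⁻¹' {shiftPt hY (k:ℤ) y}), φ x.1 = shiftPt hY (k:ℤ) y := fun x => x.2
  apply Nat.card_eq_of_bijective (fun x : ↥(φ ⁻¹' {shiftPt hY (k:ℤ) y}) =>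
    (⟨shiftPt hX (-(k:ℤ)) x.1, key x.1 (memfix x)⟩ : ↥(φ ⁻¹' {y})))
  constructor
  · intro a b hab
    have := congrArg Subtype.val hab
    exact Subtype.ext (shiftPt_inj hX _ this)
  · rintro ⟨x, hx⟩
    have hx' : φ x = y := hx
    refine ⟨⟨shiftPt hX (k:ℤ) x, ?_⟩, ?_⟩
    · show φ _ = _
      rw [code_shiftPt_nat hX hY hφ, hx']
    · apply Subtype.ext
      show shiftPt hX (-(k:ℤ)) (shiftPt hX (k:ℤ) x) = x
      rw [shiftPt_comp, neg_add_cancel, shiftPt_zero]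

lemma lsc_fiber [TopologicalSpace A] [TopologicalSpace B] [DiscreteTopology A]
    {X : Set (ℤ → A)} {Y : Set (ℤ → B)} (φ : ↥X → ↥Y)
    (hfin : ∀ y, (φ ⁻¹' {y}).Finite) (hopen : IsOpenMap φ) (z : ↥Y) :
    ∃ V : Set ↥Y, IsOpen V ∧ z ∈ V ∧
      ∀ y' ∈ V, Nat.card (φ ⁻¹' {z}) ≤ Nat.card (φ ⁻¹' {y'}) := by
  classical
  set S : Set ↥X := φ ⁻¹' {z} with hSdef
  have hS : S.Finite := hfin z
  have hcex : ∀ p q : ↥X, ∃ cc : ℤ, p ≠ q → (p : ℤ → A) cc ≠ (q : ℤ → A) cc := by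
    intro p q
    by_cases h : p = q
    · exact ⟨0, fun hn => absurd h hn⟩
    · have h' : (p : ℤ → A) ≠ (q : ℤ → A) := fun hh => h (Subtype.ext hh)
      obtain ⟨cc, hcc⟩ := Function.ne_iff.mp h'
      exact ⟨cc, fun _ => hcc⟩
  choose c hcspec using hcex
  set U : ↥X → Set ↥X := fun p =>
    ⋂ q ∈ S, {x : ↥X | (x : ℤ → A) (c p q) = (p : ℤ → A) (c p q) ∧
      (x : ℤ → A) (c q p) = (p : ℤ → A) (c q p)} with hUdef
  have hUopen : ∀ p, IsOpen (U p) := by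
    intro p
    apply hS.isOpen_biInter
    intro q _
    have hcont : ∀ m : ℤ, Continuous fun x : ↥X => (x : ℤ → A) m :=
      fun m => (continuous_apply m).comp continuous_subtype_val
    exact ((hcont (c p q)).isOpen_preimage {(p : ℤ → A) (c p q)} (isOpen_discrete _)).inter
      ((hcont (c q p)).isOpen_preimage {(p : ℤ → A) (c q p)} (isOpen_discrete _))
  have hUmem : ∀ p, p ∈ U p := by
    intro p
    apply mem_iInter₂.mpr
    intro q _
    exact ⟨rfl, rfl⟩
  refine ⟨⋂ p ∈ S, φ '' (U p), hS.isOpen_biInter (fun p _ => hopen _ (hUopen p)), ?_, ?_⟩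
  · apply mem_iInter₂.mpr
    intro p hp
    exact ⟨p, hUmem p, hp⟩
  · intro y' hy'
    have hmem : ∀ p ∈ S, ∃ x, x ∈ U p ∧ φ x = y' := by
      intro p hp
      obtain ⟨x, hx1, hx2⟩ := mem_iInter₂.mp hy' p hp
      exact ⟨x, hx1, hx2⟩
    choose f hf1 hf2 using hmem
    have hfinY : Finite ↥(φ ⁻¹' {y'}) := (hfin y').to_subtype
    have hinj : Function.Injective
        (fun p : ↥S => (⟨f p.1 p.2, by simp [hf2 p.1 p.2]⟩ : ↥(φ ⁻¹' {y'}))) := by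
      intro p q hpq
      simp only [Subtype.mk_eq_mk] at hpq
      by_contra hne
      have hne' : p.1 ≠ q.1 := fun h => hne (Subtype.ext h)
      have h1 := hf1 p.1 p.2
      have h2 := hf1 q.1 q.2
      rw [hpq] at h1
      have ha := (mem_iInter₂.mp h1 q.1 q.2).1
      have hb := (mem_iInter₂.mp h2 p.1 p.2).2
      exact hcspec p.1 q.1 hne' (ha.symm.trans hb)
    exact Nat.card_le_card_of_injective _ hinj

lemma orbit_dense [TopologicalSpace B] [DiscreteTopology B] {Y : Set (ℤ → B)}
    (hY : IsSubshift Y) {y : ↥Y} (hdt : DoublyTransitive Y y.1)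
    {V : Set ↥Y} (hV : IsOpen V) (hVne : V.Nonempty) :
    ∃ k : ℕ, shiftPt hY (k : ℤ) y ∈ V := by
  obtain ⟨z, hz⟩ := hVne
  obtain ⟨W, hW, hWV⟩ := isOpen_induced_iff.mp hV
  have hzW : (z : ℤ → B) ∈ W := by rw [← hWV] at hz; exact hz
  obtain ⟨I, u, hIu, hpi⟩ := isOpen_pi_iff.mp hW _ hzW
  set n : ℕ := I.sup (fun a => a.natAbs) with hn
  have hIn : ∀ a ∈ I, a.natAbs ≤ n := fun a ha => Finset.le_sup ha
  set w : List B := window (z : ℤ → B) (-(n:ℤ)) (2*n+1) with hw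
  have hwlen : w.length = 2*n+1 := window_length _ _ _
  obtain ⟨k, hk, hocc⟩ := (hdt w (wordIn_window z.2 _ _) 0).1
  refine ⟨k.toNat + n, ?_⟩
  rw [← hWV]
  have hgoal : shiftZ ((k.toNat + n : ℕ) : ℤ) y.1 ∈ W := by
    apply hpi
    rw [Set.mem_pi]
    intro a ha
    have han : a.natAbs ≤ n := hIn a ha
    have hjlt : (a + (n:ℤ)).toNat < w.length := by rw [hwlen]; omega
    have hval : y.1 (a + (k + (n:ℤ))) = (z : ℤ → B) a := by
      have h1 := hocc ⟨(a + (n:ℤ)).toNat, hjlt⟩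
      have h2 := occursAt_window (z : ℤ → B) (-(n:ℤ)) (2*n+1) ⟨(a + (n:ℤ)).toNat, hjlt⟩
      rw [show k + (((a + (n:ℤ)).toNat : ℕ) : ℤ) = a + (k + (n:ℤ)) by omega] at h1
      rw [show -(n:ℤ) + (((a + (n:ℤ)).toNat : ℕ) : ℤ) = a by omega] at h2
      exact h1.trans h2.symm
    have hcoord : shiftZ ((k.toNat + n : ℕ) : ℤ) y.1 a = (z : ℤ → B) a := by
      show y.1 (a + ((k.toNat + n : ℕ) : ℤ)) = _
      rw [show a + ((k.toNat + n : ℕ) : ℤ) = a + (k + (n:ℤ)) by omega]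
      exact hval
    rw [hcoord]
    exact (hIu a ha).2
  exact hgoal


theorem finite_to_one_open_has_degree {A : Type*} {B : Type*} [Finite A] [TopologicalSpace A] [DiscreteTopology A]
    [Finite B] [TopologicalSpace B] [DiscreteTopology B]
    {X : Set (ℤ → A)} {Y : Set (ℤ → B)} (hX : IsSubshift X) (hY : IsSubshift Y)
    (φ : X → Y) (hφ : IsCode φ)
    (hne : X.Nonempty) (hfin : FiniteToOne φ) (hopen : IsOpenMap φ)
    (hYirr : IrreducibleSubshift Y) :
    ∃ d : ℕ, 0 < d ∧
      (∀ y : Y, DoublyTransitive Y y.1 →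
        (φ ⁻¹' {y}).Finite ∧ Nat.card (φ ⁻¹' {y}) = d) ∧
      (∀ y : Y, (φ ⁻¹' {y}).Finite ∧ Nat.card (φ ⁻¹' {y}) ≤ d) := by
  
  classical
  obtain ⟨x0, hx0⟩ := hne
  set y0 : ↥Y := φ ⟨x0, hx0⟩ with hy0
  have hYne : Y.Nonempty := ⟨y0.1, y0.2⟩
  obtain ⟨yD, hyDY, hDT⟩ := exists_doublyTransitive hY hYirr hYne
  set yD' : ↥Y := ⟨yD, hyDY⟩ with hyD'
  set d := Nat.card (φ ⁻¹' {yD'}) with hd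
  have hDT' : DoublyTransitive Y yD'.1 := hDT
  have hle : ∀ z : ↥Y, Nat.card (φ ⁻¹' {z}) ≤ d := by
    intro z
    obtain ⟨V, hVopen, hzV, hV⟩ := lsc_fiber φ hfin hopen z
    obtain ⟨k, hk⟩ := orbit_dense hY hDT' hVopen ⟨z, hzV⟩
    calc Nat.card (φ ⁻¹' {z}) ≤ Nat.card (φ ⁻¹' {shiftPt hY (k:ℤ) yD'}) := hV _ hk
    _ = d := fiber_card_shift hX hY hφ k yD'
  have hge : ∀ y : ↥Y, DoublyTransitive Y y.1 → d ≤ Nat.card (φ ⁻¹' {y}) := by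
    intro y hy
    obtain ⟨V, hVopen, hzV, hV⟩ := lsc_fiber φ hfin hopen yD'
    obtain ⟨k, hk⟩ := orbit_dense hY hy hVopen ⟨yD', hzV⟩
    calc d ≤ Nat.card (φ ⁻¹' {shiftPt hY (k:ℤ) y}) := hV _ hk
    _ = Nat.card (φ ⁻¹' {y}) := fiber_card_shift hX hY hφ k y
  have hdpos : 0 < d := by
    have hropen : IsOpen (range φ) := by
      rw [← image_univ]; exact hopen _ isOpen_univ
    obtain ⟨k, hk⟩ := orbit_dense hY hDT' hropen ⟨y0, mem_range_self _⟩
    obtain ⟨x, hxk⟩ := hk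
    have hfib : φ (shiftPt hX (-(k:ℤ)) x) = yD' := by
      have h1 : φ (shiftPt hX ((k:ℤ)) (shiftPt hX (-(k:ℤ)) x)) = φ x := by
        rw [shiftPt_comp, add_neg_cancel, shiftPt_zero]
      rw [code_shiftPt_nat hX hY hφ] at h1
      apply shiftPt_inj hY (k:ℤ)
      rw [h1, hxk]
    have hne1 : Nonempty ↥(φ ⁻¹' {yD'}) := Set.Nonempty.to_subtype ⟨_, hfib⟩
    have hne2 : Finite ↥(φ ⁻¹' {yD'}) := (hfin yD').to_subtype
    exact Nat.card_pos
  exact ⟨d, hdpos, fun y hy => ⟨hfin y, le_antisymm (hle y) (hge y hy)⟩,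
    fun y => ⟨hfin y, hle y⟩⟩
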